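/- Let F: ℝⁿ ⇉ ℝⁿ have convex graph, δ, σ, h > 0, θ = δ/σ, and G(u₁,u₂,u,u₃,u₄) = −u₁ − θ²u₂ + (2+2θ²−δ²/h)u − θ²u₃ + (δ²/h)u₄ − δ²F(u). Let (u₁,u₂,u,u₃,u₄,v) ∈ gph G, w = (2/δ²+2/σ²−1/h)u + (1/h)u₄ − (1/δ²)u₁ − (1/σ²)u₂ − (1/σ²)u₃ − (1/δ²)v, and v* ∈ ℝⁿ with v ∈ G_A(u₁,u₂,u,u₃,u₄; v*). Then (u₁*, u₂*, u*, u₃*, u₄*) ∈ G*(v*; (u₁,u₂,u,u₃,u₄,v)) with u₁* = −v*, u₂* = u₃* = −θ²v*, u₄* = (δ²/h)v* if and only if (1/δ²)u* − (2/δ² + 2/σ² − 1/h)v* ∈ F*(−v*; (u, w)). -/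

import Mathlib

open RealInnerProductSpace

noncomputable def HamE {n : ℕ} {X : Type*} (F : X → Set (EuclideanSpace ℝ (Fin n)))
    (u : X) (vs : EuclideanSpace ℝ (Fin n)) : EReal :=
  sSup ((fun v => ((⟪v, vs⟫ : ℝ) : EReal)) '' F u)

def Gset {n : ℕ} (δ σ h : ℝ) (F : EuclideanSpace ℝ (Fin n) → Set (EuclideanSpace ℝ (Fin n)))
    (u₁ u₂ u u₃ u₄ : EuclideanSpace ℝ (Fin n)) : Set (EuclideanSpace ℝ (Fin n)) :=
  (fun w => -u₁ - (δ / σ) ^ 2 • u₂ + (2 + 2 * (δ / σ) ^ 2 - δ ^ 2 / h) • u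
      - (δ / σ) ^ 2 • u₃ + (δ ^ 2 / h) • u₄ - δ ^ 2 • w) '' F u

lemma affine_le_affine_iff (a : ℝ) {d : ℝ} (hd : 0 < d) (X Y : EReal) :
    (a : EReal) + (d : EReal) * X ≤ (a : EReal) + (d : EReal) * Y ↔ X ≤ Y := by
  have hd' : (0:EReal) < (d:EReal) := EReal.coe_pos.2 hd
  induction X using EReal.rec <;> induction Y using EReal.rec <;>
    simp_all [EReal.mul_bot_of_pos, EReal.mul_top_of_pos, EReal.add_bot, EReal.coe_add_top,
      ← EReal.coe_mul, ← EReal.coe_add, EReal.coe_le_coe_iff, mul_le_mul_iff_right₀ hd]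

lemma affine_strictMono (a : ℝ) {d : ℝ} (hd : 0 < d) :
    StrictMono (fun x : EReal => (a : EReal) + (d : EReal) * x) := by
  intro x y hxy
  rw [lt_iff_not_ge] at hxy ⊢
  exact fun hc => hxy ((affine_le_affine_iff a hd y x).1 hc)

lemma affine_surjective (a : ℝ) {d : ℝ} (hd : 0 < d) :
    Function.Surjective (fun x : EReal => (a : EReal) + (d : EReal) * x) := by
  have hd' : (0:EReal) < (d:EReal) := EReal.coe_pos.2 hd
  intro y
  induction y using EReal.rec with
  | bot => exact ⟨⊥, by simp [EReal.mul_bot_of_pos hd', EReal.add_bot]⟩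
  | top => exact ⟨⊤, by simp [EReal.mul_top_of_pos hd', EReal.coe_add_top]⟩
  | coe y =>
    refine ⟨((y - a)/d : ℝ), ?_⟩
    show (a : EReal) + (d : EReal) * (((y - a)/d : ℝ) : EReal) = (y : EReal)
    rw [← EReal.coe_mul, ← EReal.coe_add, EReal.coe_eq_coe_iff]
    field_simp
    ring

noncomputable def erealAffineIso (a : ℝ) {d : ℝ} (hd : 0 < d) : EReal ≃o EReal :=
  StrictMono.orderIsoOfSurjective _ (affine_strictMono a hd) (affine_surjective a hd)

lemma sSup_affine (a : ℝ) {d : ℝ} (hd : 0 < d) (S : Set EReal) :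
    sSup ((fun x => (a : EReal) + (d : EReal) * x) '' S)
      = (a : EReal) + (d : EReal) * sSup S := by
  have := (erealAffineIso a hd).map_sSup S
  simp only [erealAffineIso, StrictMono.coe_orderIsoOfSurjective] at this
  rw [sSup_image]
  exact this.symm

lemma ereal_key {a b s : ℝ} {d : ℝ} (hd : 0 < d) (X Y : EReal) {t : ℝ}
    (ht : a + d * t = b + s) :
    (a : EReal) + (d : EReal) * X ≤ (b : EReal) + (d : EReal) * Y + (s : EReal) ↔
      X ≤ Y + (t : EReal) := by
  have hd' : (0:EReal) < (d:EReal) := EReal.coe_pos.2 hd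
  have key : (a : EReal) + (d : EReal) * (Y + (t : EReal))
      = (b : EReal) + (d : EReal) * Y + (s : EReal) := by
    induction Y using EReal.rec with
    | bot => simp [EReal.mul_bot_of_pos hd', EReal.add_bot, EReal.bot_add]
    | top =>
        simp [EReal.top_add_coe, EReal.mul_top_of_pos hd', EReal.coe_add_top]
    | coe y =>
        rw [← EReal.coe_add, ← EReal.coe_mul, ← EReal.coe_add, ← EReal.coe_mul, ← EReal.coe_add,
          ← EReal.coe_add, EReal.coe_eq_coe_iff]
        nlinarith [ht]
  rw [← key]
  exact affine_le_affine_iff a hd X (Y + (t : EReal))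

lemma ham_Gset {n : ℕ} (δ σ h : ℝ) (hδ : 0 < δ)
    (F : EuclideanSpace ℝ (Fin n) → Set (EuclideanSpace ℝ (Fin n)))
    (vs z₁ z₂ z₃ z₄ z₅ : EuclideanSpace ℝ (Fin n)) :
    HamE (fun z' : EuclideanSpace ℝ (Fin n) × EuclideanSpace ℝ (Fin n) ×
        EuclideanSpace ℝ (Fin n) × EuclideanSpace ℝ (Fin n) × EuclideanSpace ℝ (Fin n) =>
        Gset δ σ h F z'.1 z'.2.1 z'.2.2.1 z'.2.2.2.1 z'.2.2.2.2) (z₁, z₂, z₃, z₄, z₅) vs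
      = ((⟪-z₁ - (δ/σ)^2 • z₂ + (2 + 2*(δ/σ)^2 - δ^2/h) • z₃ - (δ/σ)^2 • z₄
          + (δ^2/h) • z₅, vs⟫ : ℝ) : EReal)
        + ((δ^2 : ℝ) : EReal) * HamE F z₃ (-vs) := by
  have hd : (0:ℝ) < δ^2 := by positivity
  show sSup ((fun v => ((⟪v, vs⟫ : ℝ) : EReal)) '' Gset δ σ h F z₁ z₂ z₃ z₄ z₅) = _
  unfold Gset HamE
  rw [Set.image_image]
  have hfun : (fun w => ((⟪-z₁ - (δ/σ)^2 • z₂ + (2 + 2*(δ/σ)^2 - δ^2/h) • z₃ - (δ/σ)^2 • z₄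
        + (δ^2/h) • z₅ - δ^2 • w, vs⟫ : ℝ) : EReal))
      = (fun x : EReal => ((⟪-z₁ - (δ/σ)^2 • z₂ + (2 + 2*(δ/σ)^2 - δ^2/h) • z₃ - (δ/σ)^2 • z₄
        + (δ^2/h) • z₅, vs⟫ : ℝ) : EReal) + ((δ^2 : ℝ) : EReal) * x)
        ∘ (fun w => ((⟪w, -vs⟫ : ℝ) : EReal)) := by
    funext w
    simp only [Function.comp_apply]
    rw [← EReal.coe_mul, ← EReal.coe_add, EReal.coe_eq_coe_iff]
    simp only [inner_sub_left, inner_add_left, inner_neg_left, inner_neg_right,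
      real_inner_smul_left]
    ring
  rw [hfun, Set.image_comp, sSup_affine _ hd]

/-- Theorem 4.2: equivalence between the locally adjoint mappings `G*` and `F*`, with
`u₁* = −v*`, `u₂* = u₃* = −θ²v*`, `u₄* = (δ²/h)v*`, expressed via Hamiltonian inequalities. -/
theorem stmt8 {n : ℕ} (δ σ h : ℝ) (hδ : 0 < δ) (hσ : 0 < σ) (hh : 0 < h)
    (F : EuclideanSpace ℝ (Fin n) → Set (EuclideanSpace ℝ (Fin n)))
    (hF : Convex ℝ {p : EuclideanSpace ℝ (Fin n) × EuclideanSpace ℝ (Fin n) | p.2 ∈ F p.1})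
    (u₁ u₂ u u₃ u₄ v w vs ustar : EuclideanSpace ℝ (Fin n))
    (hv : v ∈ Gset δ σ h F u₁ u₂ u u₃ u₄)
    (hw : w = (2 / δ ^ 2 + 2 / σ ^ 2 - 1 / h) • u + (1 / h) • u₄ - (1 / δ ^ 2) • u₁
      - (1 / σ ^ 2) • u₂ - (1 / σ ^ 2) • u₃ - (1 / δ ^ 2) • v)
    (hargmax : ((⟪v, vs⟫ : ℝ) : EReal) = HamE (fun z : EuclideanSpace ℝ (Fin n) ×
        EuclideanSpace ℝ (Fin n) × EuclideanSpace ℝ (Fin n) × EuclideanSpace ℝ (Fin n) ×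
        EuclideanSpace ℝ (Fin n) =>
        Gset δ σ h F z.1 z.2.1 z.2.2.1 z.2.2.2.1 z.2.2.2.2) (u₁, u₂, u, u₃, u₄) vs) :
    (∀ z : EuclideanSpace ℝ (Fin n) × EuclideanSpace ℝ (Fin n) × EuclideanSpace ℝ (Fin n) ×
        EuclideanSpace ℝ (Fin n) × EuclideanSpace ℝ (Fin n),
      HamE (fun z' : EuclideanSpace ℝ (Fin n) × EuclideanSpace ℝ (Fin n) ×
          EuclideanSpace ℝ (Fin n) × EuclideanSpace ℝ (Fin n) × EuclideanSpace ℝ (Fin n) =>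
          Gset δ σ h F z'.1 z'.2.1 z'.2.2.1 z'.2.2.2.1 z'.2.2.2.2) z vs ≤
        HamE (fun z' : EuclideanSpace ℝ (Fin n) × EuclideanSpace ℝ (Fin n) ×
          EuclideanSpace ℝ (Fin n) × EuclideanSpace ℝ (Fin n) × EuclideanSpace ℝ (Fin n) =>
          Gset δ σ h F z'.1 z'.2.1 z'.2.2.1 z'.2.2.2.1 z'.2.2.2.2) (u₁, u₂, u, u₃, u₄) vs
        + (((⟪-vs, z.1 - u₁⟫ + ⟪-(δ / σ) ^ 2 • vs, z.2.1 - u₂⟫ + ⟪ustar, z.2.2.1 - u⟫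
            + ⟪-(δ / σ) ^ 2 • vs, z.2.2.2.1 - u₃⟫
            + ⟪(δ ^ 2 / h) • vs, z.2.2.2.2 - u₄⟫ : ℝ) : EReal))) ↔
    (∀ ut : EuclideanSpace ℝ (Fin n),
      HamE F ut (-vs) ≤ HamE F u (-vs)
        + ((⟪(1 / δ ^ 2) • ustar - (2 / δ ^ 2 + 2 / σ ^ 2 - 1 / h) • vs, ut - u⟫ : ℝ) : EReal)) := by
  have hd : (0:ℝ) < δ^2 := by positivity
  have hδ' : δ ≠ 0 := ne_of_gt hδ
  have hσ' : σ ≠ 0 := ne_of_gt hσ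
  have hh' : h ≠ 0 := ne_of_gt hh
  constructor
  · intro H ut
    have h1 := H (u₁, u₂, ut, u₃, u₄)
    rw [ham_Gset δ σ h hδ F vs, ham_Gset δ σ h hδ F vs] at h1
    refine (ereal_key hd _ _ ?_).1 h1
    simp only [inner_sub_left, inner_add_left, inner_neg_left, inner_neg_right,
      inner_sub_right, inner_add_right, real_inner_smul_left, real_inner_smul_right,
      real_inner_comm vs]
    field_simp
    ring
  · intro H z
    obtain ⟨z₁, z₂, z₃, z₄, z₅⟩ := z
    rw [ham_Gset δ σ h hδ F vs, ham_Gset δ σ h hδ F vs]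
    refine (ereal_key hd _ _ ?_).2 (H z₃)
    simp only [inner_sub_left, inner_add_left, inner_neg_left, inner_neg_right,
      inner_sub_right, inner_add_right, real_inner_smul_left, real_inner_smul_right,
      real_inner_comm vs]
    field_simp
    ring
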